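/- Subtracting a constant from all dimensions adjacent to arrows preserves the supersymmetry inequalities. Let a separated affine type A bow diagram as above satisfy the supersymmetry inequalities and assume w > v_0 − v_n ≥ 0. Let a be an integer with a ≤ v_s for every s ∈ {1,...,n}. Then the modified dimension vector v' defined by v'_s = v_s − a for s ∈ {0,...,n}, v'_{-k} = v_{-k} for k ∈ {1,...,w−1}, v'_{-0} = v_0 − a and v'_{-w} = v_n − a (the bow subdiagram obtained by subtracting a from every dimension adjacent to an arrow) again satisfies the supersymmetry inequalities, i.e. all quantities cD^t_{s,k} and aD^t_{n+1-s,w+1-k} formed from v' are ≥ 0 for all t ≥ 1, s ∈ {0,...,n}, k ∈ {0,...,w}. -/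
import Mathlib


/-- The supersymmetry inequalities for a separated affine type A bow diagram with `n` arrows
and `w` x-points, dimension vector `va s = v_s` (`0 ≤ s ≤ n`), `vx k = v_{-k}` (`0 ≤ k ≤ w`):
`cD^t_{s,k} ≥ 0` and `aD^t_{n+1-s,w+1-k} ≥ 0` for all `t ≥ 1`, `0 ≤ s ≤ n`, `0 ≤ k ≤ w`. -/
def SatisfiesSusyIneq (n w : ℕ) (va vx : ℕ → ℤ) : Prop :=
  ∀ t s k : ℕ, 1 ≤ t → s ≤ n → k ≤ w →
    (0 ≤ (s : ℤ) * k + ((t : ℤ) - 1) * ((s : ℤ) * w + (k : ℤ) * n)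
        + ((t : ℤ) - 1) * ((t : ℤ) - 2) / 2 * w * n
        + va s + vx k + ((t : ℤ) - 1) * vx w - (t : ℤ) * va 0) ∧
    (0 ≤ (s : ℤ) * k + ((t : ℤ) - 1) * ((s : ℤ) * w + (k : ℤ) * n)
        + ((t : ℤ) - 1) * ((t : ℤ) - 2) / 2 * w * n
        + va (n - s) + vx (w - k) + ((t : ℤ) - 1) * va 0 - (t : ℤ) * vx w)

private lemma half_spec (t : ℕ) (ht : 1 ≤ t) :
    ∃ P : ℤ, ((t : ℤ) - 1) * ((t : ℤ) - 2) / 2 = P ∧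
      2 * P = ((t : ℤ) - 1) * ((t : ℤ) - 2) ∧ 0 ≤ P := by
  have h2 : (2 : ℤ) ∣ ((t : ℤ) - 1) * ((t : ℤ) - 2) := by
    obtain ⟨m, hm⟩ := Int.even_mul_succ_self ((t : ℤ) - 2)
    exact ⟨m, by linear_combination hm⟩
  have hnn : 0 ≤ ((t : ℤ) - 1) * ((t : ℤ) - 2) := by
    obtain h1 | h2' : t = 1 ∨ 2 ≤ t := by omega
    · subst h1; norm_num
    · have : (2 : ℤ) ≤ t := by exact_mod_cast h2'
      nlinarith
  exact ⟨_, rfl, Int.mul_ediv_cancel' h2, Int.ediv_nonneg hnn (by norm_num)⟩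

private lemma keyL (n w : ℕ) (hn : 1 ≤ n) (hw : 1 ≤ w) (va : ℕ → ℤ)
    (hd0 : 0 ≤ va 0 - va n) (hdw : va 0 - va n < w)
    (a : ℤ) (ha : ∀ s : ℕ, 1 ≤ s → s ≤ n → a ≤ va s)
    (t s : ℕ) (ht : 1 ≤ t) (hs : s ≤ n)
    (P : ℤ) (hP0 : 0 ≤ P) (hP2 : 2 * P = ((t : ℤ) - 1) * ((t : ℤ) - 2)) :
    a ≤ ((t : ℤ) - 1) * ((s : ℤ) * w) + P * w * n + va s
        + ((t : ℤ) - 1) * (va n - va 0) := by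
  have hw1 : (1 : ℤ) ≤ w := by exact_mod_cast hw
  have hn1 : (1 : ℤ) ≤ n := by exact_mod_cast hn
  have ht1 : (1 : ℤ) ≤ t := by exact_mod_cast ht
  have hdw' : va 0 - va n ≤ (w : ℤ) - 1 := by
    have : va 0 - va n < (w : ℤ) := hdw
    linarith
  have hPwn : 0 ≤ P * w * n := by positivity
  rcases Nat.eq_zero_or_pos s with hs0 | hs1
  · subst hs0
    have han : a ≤ va n := ha n hn le_rfl
    obtain h1 | h2 : t ≤ 2 ∨ 3 ≤ t := by omega
    · have hPz : P = 0 := by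
        obtain rfl | rfl : t = 1 ∨ t = 2 := by omega
        · norm_num at hP2; linarith
        · norm_num at hP2; linarith
      subst hPz
      obtain rfl | rfl : t = 1 ∨ t = 2 := by omega
      · push_cast; linarith
      · push_cast; linarith
    · have ht3 : (3 : ℤ) ≤ t := by exact_mod_cast h2
      have hx1 : (0 : ℤ) ≤ ((t : ℤ) - 3) * (va 0 - va n) :=
        mul_nonneg (by linarith) hd0
      have hx2 : (0 : ℤ) ≤ ((t : ℤ) - 2) * ((w : ℤ) - 1 - (va 0 - va n)) :=
        mul_nonneg (by linarith) (by linarith)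
      have hx3 : (0 : ℤ) ≤ (((t : ℤ) - 2) * ((t : ℤ) - 1)) * ((w : ℤ) * n - w) := by
        have : (0 : ℤ) ≤ (w : ℤ) * n - w := by nlinarith
        exact mul_nonneg (mul_nonneg (by linarith) (by linarith)) this
      have f1 : (0 : ℤ) ≤ ((t : ℤ) - 1) * (((t : ℤ) - 2) * ((w : ℤ) - 1 - (va 0 - va n))) :=
        mul_nonneg (by linarith) hx2
      have f4 : (0 : ℤ) ≤ ((t : ℤ) - 2) * ((t : ℤ) - 1) :=
        mul_nonneg (by linarith) (by linarith)
      have f5 : (0 : ℤ) ≤ ((t : ℤ) - 2) * (((t : ℤ) - 3) * (va 0 - va n)) :=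
        mul_nonneg (by linarith) hx1
      have hPwn2 : 2 * P * ((w : ℤ) * n) = ((t : ℤ) - 1) * ((t : ℤ) - 2) * ((w : ℤ) * n) := by
        rw [mul_assoc] at *
        linear_combination ((w : ℤ) * n) * hP2
      nlinarith [hPwn2, f1, hx3, f4, f5, han]
  · have hs1' : (1 : ℤ) ≤ s := by exact_mod_cast hs1
    have hva : a ≤ va s := ha s hs1 hs
    have hsw : (w : ℤ) ≤ (s : ℤ) * w := by nlinarith
    have hkey : 0 ≤ ((t : ℤ) - 1) * ((s : ℤ) * w - (va 0 - va n)) :=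
      mul_nonneg (by linarith) (by linarith)
    nlinarith [hkey, hPwn]

private lemma keyM (n w : ℕ) (hn : 1 ≤ n) (hw : 1 ≤ w) (va : ℕ → ℤ)
    (hd0 : 0 ≤ va 0 - va n)
    (a : ℤ) (ha : ∀ s : ℕ, 1 ≤ s → s ≤ n → a ≤ va s)
    (t s : ℕ) (ht : 1 ≤ t) (hs : s ≤ n)
    (P : ℤ) (hP0 : 0 ≤ P) :
    a ≤ ((t : ℤ) - 1) * ((s : ℤ) * w) + P * w * n + va (n - s)
        + ((t : ℤ) - 1) * (va 0 - va n) := by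
  have ht1 : (1 : ℤ) ≤ t := by exact_mod_cast ht
  have hPwn : 0 ≤ P * w * n := by positivity
  have h1 : 0 ≤ ((t : ℤ) - 1) * ((s : ℤ) * w) :=
    mul_nonneg (by linarith) (by positivity)
  have h2 : 0 ≤ ((t : ℤ) - 1) * (va 0 - va n) := mul_nonneg (by linarith) hd0
  have hva : a ≤ va (n - s) := by
    rcases Nat.lt_or_ge s n with hlt | hge
    · exact ha (n - s) (by omega) (by omega)
    · have : n - s = 0 := by omega
      rw [this]
      have := ha n hn le_rfl
      linarith
  linarith

theorem subtract_arrow_dims_preserves_susy_ineq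
    (n w : ℕ) (hn : 1 ≤ n) (hw : 1 ≤ w)
    (va vx : ℕ → ℤ) (hvx0 : vx 0 = va 0) (hvnw : vx w = va n)
    (hsusy : SatisfiesSusyIneq n w va vx)
    (hd0 : 0 ≤ va 0 - va n) (hdw : va 0 - va n < w)
    (a : ℤ) (ha : ∀ s : ℕ, 1 ≤ s → s ≤ n → a ≤ va s)
    (va' vx' : ℕ → ℤ)
    (hva' : ∀ s ≤ n, va' s = va s - a)
    (hvx'0 : vx' 0 = va 0 - a)
    (hvx'mid : ∀ k : ℕ, 1 ≤ k → k < w → vx' k = vx k)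
    (hvx'w : vx' w = va n - a) :
    SatisfiesSusyIneq n w va' vx' := by
  intro t s k ht hs hk
  obtain ⟨P, hPdef, hP2, hP0⟩ := half_spec t ht
  rw [hPdef, hva' s hs, hva' 0 (Nat.zero_le n), hva' (n - s) (by omega), hvx'w]
  rcases Nat.eq_zero_or_pos k with rfl | hk1
  · rw [hvx'0, Nat.sub_zero, hvx'w]
    have hL := keyL n w hn hw va hd0 hdw a ha t s ht hs P hP0 hP2
    have hM := keyM n w hn hw va hd0 a ha t s ht hs P hP0
    constructor <;> · push_cast; linarith
  · obtain hke | hklt := eq_or_lt_of_le hk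
    · subst hke
      rw [hvx'w, Nat.sub_self, hvx'0]
      have hQ0 : (0 : ℤ) ≤ P + ((t : ℤ) - 1) := by omega
      have hQ2 : 2 * (P + ((t : ℤ) - 1)) =
          (((t + 1 : ℕ) : ℤ) - 1) * (((t + 1 : ℕ) : ℤ) - 2) := by
        push_cast; linear_combination hP2
      have hL := keyL n k hn hw va hd0 hdw a ha (t + 1) s (by omega) hs
        (P + ((t : ℤ) - 1)) hQ0 hQ2
      have hM := keyM n k hn hw va hd0 a ha (t + 1) s (by omega) hs
        (P + ((t : ℤ) - 1)) hQ0
      push_cast at hL hM ⊢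
      constructor <;> linarith
    · rw [hvx'mid k hk1 hklt, hvx'mid (w - k) (by omega) (by omega)]
      have h := hsusy t s k ht hs hk
      rw [hPdef, hvnw] at h
      constructor <;> · push_cast; linarith [h.1, h.2]
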